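/- Let δ_S, δ_{BL}, c > 0, b > 0, and let V : ℝ → ℝ satisfy 0 < V'(ζ) and |V'(ζ)| ≤ δ_S² e^{−cδ_S|ζ|} for all ζ, and let W : [0,∞) → ℝ satisfy |W'(ξ)| ≤ δ_{BL}²/(1+δ_{BL}ξ)² and |W(ξ) − w*| ≤ δ_{BL}/(1+δ_{BL}ξ). Suppose the argument shift is such that |ξ − s(t)| ≥ −ξ + (3/2)bt for ξ ∈ [0, bt], where s(t) ≥ (3/2)bt. Then ∫₀^∞ |V'(ξ − s(t))|²|W(ξ) − w*|² dξ ≤ C(δ_S³δ_{BL}² e^{−c'δ_S t} + δ_S³δ_{BL}²/(1+δ_{BL}t)²) for constants C, c' > 0 independent of t, δ_S, δ_{BL}. -/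

import Mathlib

open MeasureTheory Set

lemma int_exp_neg_mul_Ioi {lam : ℝ} (hl : 0 < lam) (a : ℝ) :
    ∫ x in Set.Ioi a, Real.exp (-(lam * x)) = Real.exp (-(lam * a)) / lam := by
  have h := integral_comp_mul_left_Ioi (fun y => Real.exp (-y)) a hl
  simp only [smul_eq_mul] at h
  rw [h, integral_exp_neg_Ioi]
  field_simp

lemma integrableOn_exp_neg_mul_abs {lam : ℝ} (hl : 0 < lam) (s a : ℝ) :
    IntegrableOn (fun ξ => Real.exp (-(lam * |ξ - s|))) (Set.Ioi a) := by
  have hg : IntegrableOn (fun x : ℝ => Real.exp (lam * s) * Real.exp (-lam * x)) (Set.Ioi a) :=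
    (exp_neg_integrableOn_Ioi a hl).const_mul _
  refine hg.mono' ?_ ?_
  · exact (Real.continuous_exp.comp
      (continuous_const.mul ((continuous_id.sub continuous_const).abs)).neg).aestronglyMeasurable
  · filter_upwards with x
    rw [Real.norm_eq_abs, Real.abs_exp, ← Real.exp_add]
    apply Real.exp_le_exp.2
    have h1 : x - s ≤ |x - s| := le_abs_self _
    nlinarith [hl.le]

lemma integral_exp_neg_mul_abs_le_aux {lam : ℝ} (hl : 0 < lam) {s a : ℝ} (has : a ≤ s) :
    ∫ ξ in Set.Ioi a, Real.exp (-(lam * |ξ - s|)) ≤ 2 / lam := by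
  rw [← Set.Ioc_union_Ioi_eq_Ioi has,
    setIntegral_union (Set.Ioc_disjoint_Ioi le_rfl) measurableSet_Ioi
      ((integrableOn_exp_neg_mul_abs hl s a).mono_set Set.Ioc_subset_Ioi_self)
      (integrableOn_exp_neg_mul_abs hl s s)]
  have h2 : ∫ ξ in Set.Ioi s, Real.exp (-(lam * |ξ - s|)) = 1 / lam := by
    rw [setIntegral_congr_fun measurableSet_Ioi
      (g := fun ξ => Real.exp (lam * s) * Real.exp (-(lam * ξ))) ?_]
    · rw [integral_const_mul, int_exp_neg_mul_Ioi hl, ← mul_div_assoc, ← Real.exp_add]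
      simp
    · intro ξ hξ
      dsimp only
      have h0 : (0:ℝ) < ξ - s := by simpa [sub_pos] using hξ
      rw [abs_of_pos h0, ← Real.exp_add]
      ring_nf
  have h1 : ∫ ξ in Set.Ioc a s, Real.exp (-(lam * |ξ - s|)) ≤ 1 / lam := by
    have e0 : ∫ ξ in Set.Ioc a s, Real.exp (-(lam * |ξ - s|))
        = ∫ ξ in a..s, Real.exp (-(lam * |ξ - s|)) :=
      (intervalIntegral.integral_of_le has).symm
    have e1 : ∫ ξ in a..s, Real.exp (-(lam * |ξ - s|))
        = Real.exp (-(lam * s)) * ∫ ξ in a..s, Real.exp (lam * ξ) := by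
      rw [← intervalIntegral.integral_const_mul]
      apply intervalIntegral.integral_congr
      intro ξ hξ
      dsimp only
      rw [Set.uIcc_of_le has] at hξ
      have : |ξ - s| = s - ξ := by
        rw [abs_of_nonpos (by linarith [hξ.2])]; ring
      rw [this, ← Real.exp_add]
      ring_nf
    have e2 : ∫ ξ in a..s, Real.exp (lam * ξ)
        = lam⁻¹ * (Real.exp (lam * s) - Real.exp (lam * a)) := by
      have h := intervalIntegral.integral_comp_mul_left (a := a) (b := s)
        (fun y => Real.exp y) (ne_of_gt hl)
      simp only [smul_eq_mul] at h
      rw [h, integral_exp]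
    rw [e0, e1, e2]
    have p1 : (0:ℝ) < Real.exp (-(lam * s)) := Real.exp_pos _
    have p2 : (0:ℝ) < Real.exp (lam * a) := Real.exp_pos _
    have p3 : Real.exp (-(lam * s)) * Real.exp (lam * s) = 1 := by
      rw [← Real.exp_add]; simp
    rw [div_eq_mul_inv, one_mul]
    nlinarith [mul_pos p1 p2, inv_pos.2 hl]
  have : (2:ℝ)/lam = 1/lam + 1/lam := by ring
  linarith

lemma integral_exp_neg_mul_abs_le {lam : ℝ} (hl : 0 < lam) (s a : ℝ) :
    ∫ ξ in Set.Ioi a, Real.exp (-(lam * |ξ - s|)) ≤ 2 / lam := by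
  rcases le_total a s with h | h
  · exact integral_exp_neg_mul_abs_le_aux hl h
  · calc ∫ ξ in Set.Ioi a, Real.exp (-(lam * |ξ - s|))
        ≤ ∫ ξ in Set.Ioi s, Real.exp (-(lam * |ξ - s|)) := by
          apply setIntegral_mono_set (integrableOn_exp_neg_mul_abs hl s s)
            (Filter.Eventually.of_forall fun x => (Real.exp_pos _).le)
          exact (Set.Ioi_subset_Ioi h).eventuallyLE
      _ ≤ 2 / lam := integral_exp_neg_mul_abs_le_aux hl le_rfl

set_option maxHeartbeats 1600000 in
/-- L² interaction estimate between the derivative of a viscous-shock-type profile `V`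
(exponentially localized around the moving shock location `s(t)`) and a
boundary-layer-type profile `W` decaying algebraically to `w*`. -/
theorem shock_boundary_layer_L2_interaction (c b ws : ℝ) (hc : 0 < c) (hb : 0 < b) :
    ∃ C > 0, ∃ c' > 0, ∀ (δS δBL : ℝ), 0 < δS → 0 < δBL →
      ∀ (V W : ℝ → ℝ) (s t : ℝ), 0 ≤ t →
      (∀ ζ : ℝ, 0 < deriv V ζ ∧ |deriv V ζ| ≤ δS ^ 2 * Real.exp (-(c * δS) * |ζ|)) →
      (∀ ξ ≥ (0:ℝ), |deriv W ξ| ≤ δBL ^ 2 / (1 + δBL * ξ) ^ 2 ∧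
        |W ξ - ws| ≤ δBL / (1 + δBL * ξ)) →
      (3/2) * b * t ≤ s →
      (∀ ξ ∈ Set.Icc (0:ℝ) (b * t), -ξ + (3/2) * b * t ≤ |ξ - s|) →
      ∫ ξ in Set.Ioi (0:ℝ), |deriv V (ξ - s)| ^ 2 * |W ξ - ws| ^ 2
        ≤ C * (δS ^ 3 * δBL ^ 2 * Real.exp (-(c' * δS) * t)
            + δS ^ 3 * δBL ^ 2 / (1 + δBL * t) ^ 2) := by
  refine ⟨2/c + (max 1 b⁻¹)^2/c, by positivity, c*b/2, by positivity, ?_⟩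
  intro δS δBL hδS hδBL V W s t ht hV hW hs hshift
  have h1t : (0:ℝ) < 1 + δBL * t := by nlinarith
  have ha : (0:ℝ) ≤ b * t := mul_nonneg hb.le ht
  have h1a : (0:ℝ) < 1 + δBL * (b * t) := by nlinarith
  have hX0 : 0 ≤ δS ^ 3 * δBL ^ 2 * Real.exp (-(c * b / 2 * δS) * t) := by positivity
  have hY0 : 0 ≤ δS ^ 3 * δBL ^ 2 / (1 + δBL * t) ^ 2 := by positivity
  by_cases hInt :
      IntegrableOn (fun ξ => |deriv V (ξ - s)| ^ 2 * |W ξ - ws| ^ 2) (Set.Ioi 0) volume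
  swap
  · rw [integral_undef hInt]
    positivity
  -- split the integral at b*t
  have hI1int : IntegrableOn (fun ξ => |deriv V (ξ - s)| ^ 2 * |W ξ - ws| ^ 2)
      (Set.Ioc 0 (b*t)) volume := hInt.mono_set Set.Ioc_subset_Ioi_self
  have hI2int : IntegrableOn (fun ξ => |deriv V (ξ - s)| ^ 2 * |W ξ - ws| ^ 2)
      (Set.Ioi (b*t)) volume := hInt.mono_set (Set.Ioi_subset_Ioi ha)
  rw [← Set.Ioc_union_Ioi_eq_Ioi ha,
    setIntegral_union (Set.Ioc_disjoint_Ioi le_rfl) measurableSet_Ioi hI1int hI2int]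
  -- Part 1 : the integral over (0, b*t]
  have hpt1 : ∀ ξ ∈ Set.Ioc (0:ℝ) (b*t), |deriv V (ξ - s)| ^ 2 * |W ξ - ws| ^ 2
      ≤ δS^4 * Real.exp (-(c*δS) * (b*t)) * δBL^2 := by
    intro ξ hξ
    have hξ1 : (0:ℝ) < ξ := hξ.1
    have hk := hshift ξ ⟨hξ.1.le, hξ.2⟩
    have habs : b*t/2 ≤ |ξ - s| := by
      have h2 := hξ.2
      linarith
    have hV2 : |deriv V (ξ - s)| ≤ δS^2 * Real.exp (-(c*δS) * (b*t/2)) := by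
      refine (hV (ξ - s)).2.trans ?_
      have : -(c*δS) * |ξ - s| ≤ -(c*δS) * (b*t/2) := by nlinarith [mul_pos hc hδS]
      exact mul_le_mul_of_nonneg_left (Real.exp_le_exp.2 this) (by positivity)
    have hW2 : |W ξ - ws| ≤ δBL := by
      refine (hW ξ hξ.1.le).2.trans ?_
      rw [div_le_iff₀ (by nlinarith)]
      nlinarith
    have hee : (δS^2 * Real.exp (-(c*δS) * (b*t/2)))^2
        = δS^4 * Real.exp (-(c*δS) * (b*t)) := by
      rw [mul_pow, sq (Real.exp _), ← Real.exp_add,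
        show -(c*δS) * (b*t/2) + -(c*δS) * (b*t/2) = -(c*δS) * (b*t) by ring]
      ring
    calc |deriv V (ξ - s)| ^ 2 * |W ξ - ws| ^ 2
        ≤ (δS^2 * Real.exp (-(c*δS) * (b*t/2)))^2 * δBL^2 := by
          exact mul_le_mul (pow_le_pow_left₀ (abs_nonneg _) hV2 2)
            (pow_le_pow_left₀ (abs_nonneg _) hW2 2) (sq_nonneg _) (by positivity)
      _ = δS^4 * Real.exp (-(c*δS) * (b*t)) * δBL^2 := by rw [hee]
  have hI1 : ∫ ξ in Set.Ioc (0:ℝ) (b*t), |deriv V (ξ - s)| ^ 2 * |W ξ - ws| ^ 2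
      ≤ (b*t) * (δS^4 * Real.exp (-(c*δS) * (b*t)) * δBL^2) := by
    have h := setIntegral_mono_on hI1int
      (integrableOn_const measure_Ioc_lt_top.ne) measurableSet_Ioc hpt1
    rwa [setIntegral_const, Real.volume_real_Ioc_of_le ha, smul_eq_mul,
      sub_zero] at h
  have hI1' : (b*t) * (δS^4 * Real.exp (-(c*δS) * (b*t)) * δBL^2)
      ≤ (2/c) * (δS ^ 3 * δBL ^ 2 * Real.exp (-(c * b / 2 * δS) * t)) := by
    have hcd : 0 < c * δS := mul_pos hc hδS
    have hx : b*t ≤ 2/(c*δS) * Real.exp (c*δS*(b*t/2)) := by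
      rw [div_mul_eq_mul_div, le_div_iff₀ hcd]
      nlinarith [Real.add_one_le_exp (c*δS*(b*t/2)), Real.exp_pos (c*δS*(b*t/2))]
    have he : Real.exp (c*δS*(b*t/2)) * Real.exp (-(c*δS) * (b*t))
        = Real.exp (-(c * b / 2 * δS) * t) := by
      rw [← Real.exp_add]; congr 1; ring
    calc (b*t) * (δS^4 * Real.exp (-(c*δS) * (b*t)) * δBL^2)
        ≤ (2/(c*δS) * Real.exp (c*δS*(b*t/2)))
            * (δS^4 * Real.exp (-(c*δS) * (b*t)) * δBL^2) := by
          exact mul_le_mul_of_nonneg_right hx (by positivity)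
      _ = (2/c) * (δS ^ 3 * δBL ^ 2 * Real.exp (-(c * b / 2 * δS) * t)) := by
          rw [← he]
          field_simp
  -- Part 2 : the integral over (b*t, ∞)
  have hlam : 0 < 2*(c*δS) := by positivity
  have hpt2 : ∀ ξ ∈ Set.Ioi (b*t), |deriv V (ξ - s)| ^ 2 * |W ξ - ws| ^ 2
      ≤ (δS^4 * (δBL^2/(1 + δBL*(b*t))^2)) * Real.exp (-(2*(c*δS) * |ξ - s|)) := by
    intro ξ hξ
    have hξbt : b*t < ξ := hξ
    have hξ0 : (0:ℝ) ≤ ξ := le_trans ha hξbt.le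
    have h1ξ : (0:ℝ) < 1 + δBL * ξ := by nlinarith
    have hVb : |deriv V (ξ - s)|^2 ≤ δS^4 * Real.exp (-(2*(c*δS) * |ξ - s|)) := by
      calc |deriv V (ξ - s)|^2 ≤ (δS^2 * Real.exp (-(c*δS) * |ξ - s|))^2 :=
            pow_le_pow_left₀ (abs_nonneg _) (hV (ξ - s)).2 2
        _ = δS^4 * Real.exp (-(2*(c*δS) * |ξ - s|)) := by
            rw [mul_pow, sq (Real.exp _), ← Real.exp_add,
              show -(c*δS) * |ξ - s| + -(c*δS) * |ξ - s| = -(2*(c*δS) * |ξ - s|) by ring]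
            ring
    have hWb : |W ξ - ws|^2 ≤ δBL^2/(1 + δBL*(b*t))^2 := by
      have h1 : |W ξ - ws| ≤ δBL / (1 + δBL*(b*t)) := by
        refine (hW ξ hξ0).2.trans ?_
        exact div_le_div_of_nonneg_left hδBL.le h1a (by nlinarith)
      calc |W ξ - ws|^2 ≤ (δBL / (1 + δBL*(b*t)))^2 := pow_le_pow_left₀ (abs_nonneg _) h1 2
        _ = δBL^2/(1 + δBL*(b*t))^2 := by rw [div_pow]
    calc |deriv V (ξ - s)| ^ 2 * |W ξ - ws| ^ 2
        ≤ (δS^4 * Real.exp (-(2*(c*δS) * |ξ - s|))) * (δBL^2/(1 + δBL*(b*t))^2) :=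
          mul_le_mul hVb hWb (sq_nonneg _) (by positivity)
      _ = (δS^4 * (δBL^2/(1 + δBL*(b*t))^2)) * Real.exp (-(2*(c*δS) * |ξ - s|)) := by ring
  have hI2 : ∫ ξ in Set.Ioi (b*t), |deriv V (ξ - s)| ^ 2 * |W ξ - ws| ^ 2
      ≤ (δS^4 * (δBL^2/(1 + δBL*(b*t))^2)) * (2/(2*(c*δS))) := by
    have h := setIntegral_mono_on hI2int
      ((integrableOn_exp_neg_mul_abs hlam s (b*t)).const_mul
        (δS^4 * (δBL^2/(1 + δBL*(b*t))^2))) measurableSet_Ioi hpt2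
    rw [integral_const_mul] at h
    refine h.trans ?_
    exact mul_le_mul_of_nonneg_left (integral_exp_neg_mul_abs_le hlam s (b*t)) (by positivity)
  have hI2' : (δS^4 * (δBL^2/(1 + δBL*(b*t))^2)) * (2/(2*(c*δS)))
      ≤ ((max 1 b⁻¹)^2/c) * (δS ^ 3 * δBL ^ 2 / (1 + δBL * t) ^ 2) := by
    have hM1 : (1:ℝ) ≤ max 1 b⁻¹ := le_max_left _ _
    have hMb : (1:ℝ) ≤ (max 1 b⁻¹) * b := by
      have h := le_max_right (1:ℝ) b⁻¹
      calc (1:ℝ) = b⁻¹ * b := by field_simp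
        _ ≤ (max 1 b⁻¹) * b := mul_le_mul_of_nonneg_right h hb.le
    have key : 1 + δBL*t ≤ (max 1 b⁻¹) * (1 + δBL*(b*t)) := by
      nlinarith [mul_nonneg (sub_nonneg.2 hMb) (mul_nonneg hδBL.le ht)]
    have hsq : (1 + δBL*t)^2 ≤ (max 1 b⁻¹)^2 * (1 + δBL*(b*t))^2 := by
      calc (1 + δBL*t)^2 ≤ ((max 1 b⁻¹) * (1 + δBL*(b*t)))^2 :=
            pow_le_pow_left₀ (by linarith) key 2
        _ = (max 1 b⁻¹)^2 * (1 + δBL*(b*t))^2 := by rw [mul_pow]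
    have e1 : (δS^4 * (δBL^2/(1 + δBL*(b*t))^2)) * (2/(2*(c*δS)))
        = (δS^3*δBL^2) / (c*(1 + δBL*(b*t))^2) := by
      field_simp
    have e2 : ((max 1 b⁻¹)^2/c) * (δS ^ 3 * δBL ^ 2 / (1 + δBL * t) ^ 2)
        = ((max 1 b⁻¹)^2 * (δS^3*δBL^2)) / (c*(1 + δBL*t)^2) := by
      rw [div_mul_div_comm]
    rw [e1, e2, div_le_div_iff₀ (by positivity) (by positivity)]
    calc δS^3*δBL^2 * (c*(1 + δBL*t)^2) = (δS^3*δBL^2*c) * (1 + δBL*t)^2 := by ring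
      _ ≤ (δS^3*δBL^2*c) * ((max 1 b⁻¹)^2 * (1 + δBL*(b*t))^2) :=
          mul_le_mul_of_nonneg_left hsq (by positivity)
      _ = (max 1 b⁻¹)^2 * (δS^3*δBL^2) * (c*(1 + δBL*(b*t))^2) := by ring
  -- combine
  have hc1 : (0:ℝ) ≤ 2/c := by positivity
  have hc2 : (0:ℝ) ≤ (max 1 b⁻¹)^2/c := by positivity
  nlinarith [hI1.trans hI1', hI2.trans hI2', mul_nonneg hc1 hY0, mul_nonneg hc2 hX0]
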